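/- Let {Y_n}_{n≥1} be independent, non-negative real random variables, and set 𝔖 := Σ_{n=1}^∞ Y_n and M_k := Σ_{n=1}^∞ E[Y_n^k] for k > 0. Then for every non-integer q > 2, writing [q] for the integer part of q, E[𝔖^q] ≤ 2^{[q]−1} ( M_q + M_{q−[q]} · E[𝔖^{[q]}] ). -/

import Mathlib

open MeasureTheory ProbabilityTheory
open scoped ENNReal NNReal

noncomputable section

private lemma aux_tsum_rpow (a : ℕ → ℝ≥0∞) {r : ℝ} (h0 : 0 < r) (h1 : r ≤ 1) :
    (∑' n, a n) ^ r ≤ ∑' n, a n ^ r := by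
  have hfin : ∀ s : Finset ℕ, (∑ n ∈ s, a n) ^ r ≤ ∑ n ∈ s, a n ^ r := by
    intro s
    induction s using Finset.cons_induction with
    | empty => simp [ENNReal.zero_rpow_of_pos h0]
    | cons i s hi ih =>
      rw [Finset.sum_cons, Finset.sum_cons]
      exact (ENNReal.rpow_add_le_add_rpow _ _ h0.le h1).trans (add_le_add_right ih _)
  have key : ∑' n, a n ≤ (∑' n, a n ^ r) ^ r⁻¹ := by
    rw [ENNReal.tsum_eq_iSup_sum]
    exact iSup_le fun s => (ENNReal.le_rpow_inv_iff h0).mpr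
      ((hfin s).trans (ENNReal.sum_le_tsum s))
  calc (∑' n, a n) ^ r ≤ ((∑' n, a n ^ r) ^ r⁻¹) ^ r := ENNReal.rpow_le_rpow key h0.le
    _ = ∑' n, a n ^ r := by
      rw [← ENNReal.rpow_mul, inv_mul_cancel₀ h0.ne', ENNReal.rpow_one]

private lemma aux_add_pow_le (a b : ℝ≥0∞) (n : ℕ) :
    (a + b) ^ n ≤ 2 ^ (n - 1) * (a ^ n + b ^ n) := by
  rcases Nat.eq_zero_or_pos n with rfl | hn
  · simp
  rcases eq_or_ne a ⊤ with rfl | ha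
  · rw [top_add, ENNReal.top_pow hn.ne', top_add, ENNReal.mul_top (pow_ne_zero _ (by norm_num))]
  rcases eq_or_ne b ⊤ with rfl | hb
  · rw [add_top, ENNReal.top_pow hn.ne', add_top, ENNReal.mul_top (pow_ne_zero _ (by norm_num))]
  lift a to ℝ≥0 using ha
  lift b to ℝ≥0 using hb
  have := add_pow_le (zero_le : (0:ℝ≥0) ≤ a) (zero_le : (0:ℝ≥0) ≤ b) n
  exact_mod_cast this

/-- for independent non-negative random variables `Y_n`, with
`𝔖 := Σ Y_n` and `M_s := Σ E[Y_n^s]`, one has, for every non-integer `q > 2`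
(with `[q] = ⌊q⌋` its integer part),
`E[𝔖^q] ≤ 2^{[q]-1} ( M_q + M_{q-[q]} · E[𝔖^{[q]}] )`
(all quantities computed in `ℝ≥0∞`, so the inequality holds trivially when
some quantity is infinite). -/
theorem indep_sum_moment_bound_noninteger
    {Ω : Type*} [MeasurableSpace Ω] (P : Measure Ω) [IsProbabilityMeasure P]
    (Y : ℕ → Ω → ℝ) (hmeas : ∀ n, Measurable (Y n)) (hpos : ∀ n ω, 0 ≤ Y n ω)
    (hindep : iIndepFun Y P)
    (q : ℝ) (hq : 2 < q) (hqnotint : ∀ n : ℕ, q ≠ n) :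
    ∫⁻ ω, (∑' n, ENNReal.ofReal (Y n ω)) ^ q ∂P
      ≤ 2 ^ (⌊q⌋₊ - 1)
          * ((∑' n, ∫⁻ ω, ENNReal.ofReal (Y n ω) ^ q ∂P)
            + (∑' n, ∫⁻ ω, ENNReal.ofReal (Y n ω) ^ (q - (⌊q⌋₊ : ℝ)) ∂P)
              * ∫⁻ ω, (∑' n, ENNReal.ofReal (Y n ω)) ^ (⌊q⌋₊ : ℕ) ∂P) := by
  rename_i mΩ _hPP
  set m : ℕ := ⌊q⌋₊ with hmdef
  set r : ℝ := q - m with hrdef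
  have hq0 : (0:ℝ) ≤ q := by linarith
  have hmq : (m:ℝ) < q :=
    (Nat.floor_le hq0).lt_of_ne fun h => hqnotint m h.symm
  have hr0 : 0 < r := sub_pos.mpr hmq
  have hr1 : r ≤ 1 := by
    have := Nat.lt_floor_add_one q
    rw [hrdef, hmdef]
    push_cast at this ⊢
    linarith
  have hq_eq : q = r + m := by rw [hrdef, sub_add_cancel]
  set f : ℕ → Ω → ℝ≥0∞ := fun n ω => ENNReal.ofReal (Y n ω) with hfdef
  have hfmeas : ∀ n, Measurable (f n) := fun n =>
    ENNReal.measurable_ofReal.comp (hmeas n)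
  set S : Ω → ℝ≥0∞ := fun ω => ∑' n, f n ω with hSdef
  have hSmeas : Measurable S := Measurable.ennreal_tsum hfmeas
  set T : ℕ → Ω → ℝ≥0∞ := fun n ω => ∑' k, @ite _ (k = n) (Classical.propDecidable _) 0 (f k ω) with hTdef
  have hTmeas : ∀ n, Measurable (T n) := by
    intro n
    apply Measurable.ennreal_tsum
    intro k
    by_cases hk : k = n
    · simpa [hk] using measurable_const
    · simpa [hk] using hfmeas k
  have hsplit : ∀ n ω, S ω = f n ω + T n ω := by
    intro n ω
    simp only [hSdef, hTdef]
    exact ENNReal.tsum_eq_add_tsum_ite n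
  have hTleS : ∀ n ω, T n ω ≤ S ω := by
    intro n ω
    simp only [hSdef, hTdef]
    exact ENNReal.tsum_le_tsum fun k => by by_cases h : k = n <;> simp [h]
  -- independence: product formula
  have hprod : ∀ n : ℕ,
      ∫⁻ ω, f n ω ^ r * T n ω ^ m ∂P
        = (∫⁻ ω, f n ω ^ r ∂P) * ∫⁻ ω, T n ω ^ m ∂P := by
    intro n
    set Mf : MeasurableSpace Ω :=
      ⨆ k ∈ ({n} : Set ℕ), MeasurableSpace.comap (Y k) inferInstance with hMf
    set Mg : MeasurableSpace Ω :=
      ⨆ k ∈ ({n} : Set ℕ)ᶜ, MeasurableSpace.comap (Y k) inferInstance with hMg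
    have hMf_le : Mf ≤ mΩ :=
      iSup₂_le fun k _ => measurable_iff_comap_le.mp (hmeas k)
    have hMg_le : Mg ≤ mΩ :=
      iSup₂_le fun k _ => measurable_iff_comap_le.mp (hmeas k)
    have h_ind : Indep Mf Mg P :=
      ProbabilityTheory.indep_biSup_compl
        (fun k => measurable_iff_comap_le.mp (hmeas k)) hindep.iIndep {n}
    have hYn : Measurable[Mf] (Y n) :=
      Measurable.of_comap_le
        (le_iSup₂ (f := fun k (_ : k ∈ ({n} : Set ℕ)) =>
          MeasurableSpace.comap (Y k) inferInstance) n (Set.mem_singleton n))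
    have hf_meas : Measurable[Mf] fun ω => f n ω ^ r :=
      (ENNReal.continuous_rpow_const.measurable.comp ENNReal.measurable_ofReal).comp hYn
    have hT_meas : Measurable[Mg] (T n) := by
      apply Measurable.ennreal_tsum
      intro k
      by_cases hk : k = n
      · simpa [hk] using @measurable_const ℝ≥0∞ Ω _ Mg 0
      · have hYk : Measurable[Mg] (Y k) :=
          Measurable.of_comap_le
            (le_iSup₂ (f := fun j (_ : j ∈ ({n} : Set ℕ)ᶜ) =>
              MeasurableSpace.comap (Y j) inferInstance) k
              (Set.mem_compl_singleton_iff.mpr hk))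
        simp only [hk, if_false]
        exact ENNReal.measurable_ofReal.comp hYk
    have hg_meas : Measurable[Mg] fun ω => T n ω ^ m := hT_meas.pow_const m
    exact ProbabilityTheory.lintegral_mul_eq_lintegral_mul_lintegral_of_independent_measurableSpace
      hMf_le hMg_le h_ind hf_meas hg_meas
  -- pointwise inequality 1
  have hpt1 : ∀ ω, S ω ^ q ≤ ∑' n, f n ω ^ r * S ω ^ m := by
    intro ω
    calc S ω ^ q = S ω ^ r * S ω ^ (m : ℝ) := by
          rw [hq_eq, ENNReal.rpow_add_of_nonneg _ _ hr0.le (Nat.cast_nonneg m)]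
      _ = S ω ^ r * S ω ^ m := by rw [ENNReal.rpow_natCast]
      _ ≤ (∑' n, f n ω ^ r) * S ω ^ m :=
          mul_le_mul_left (aux_tsum_rpow _ hr0 hr1) _
      _ = ∑' n, f n ω ^ r * S ω ^ m := ENNReal.tsum_mul_right.symm
  -- pointwise inequality 2
  have hpt2 : ∀ n ω, f n ω ^ r * S ω ^ m
      ≤ 2 ^ (m - 1) * (f n ω ^ q + f n ω ^ r * T n ω ^ m) := by
    intro n ω
    calc f n ω ^ r * S ω ^ m = f n ω ^ r * (f n ω + T n ω) ^ m := by
          rw [← hsplit n ω]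
      _ ≤ f n ω ^ r * (2 ^ (m - 1) * (f n ω ^ m + T n ω ^ m)) :=
          mul_le_mul_right (aux_add_pow_le _ _ m) _
      _ = 2 ^ (m - 1) * (f n ω ^ r * f n ω ^ m + f n ω ^ r * T n ω ^ m) := by
          ring
      _ = 2 ^ (m - 1) * (f n ω ^ q + f n ω ^ r * T n ω ^ m) := by
          rw [← ENNReal.rpow_natCast (f n ω) m,
            ← ENNReal.rpow_add_of_nonneg r (m : ℝ) hr0.le (Nat.cast_nonneg m), ← hq_eq]
  have hfr_meas : ∀ n, Measurable fun ω => f n ω ^ r := fun n =>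
    ENNReal.continuous_rpow_const.measurable.comp (hfmeas n)
  have hfq_meas : ∀ n, Measurable fun ω => f n ω ^ q := fun n =>
    ENNReal.continuous_rpow_const.measurable.comp (hfmeas n)
  have hTm_le : ∀ n, ∫⁻ ω, T n ω ^ m ∂P ≤ ∫⁻ ω, S ω ^ m ∂P := fun n =>
    lintegral_mono fun ω => pow_le_pow_left' (hTleS n ω) m
  calc ∫⁻ ω, S ω ^ q ∂P
      ≤ ∫⁻ ω, ∑' n, f n ω ^ r * S ω ^ m ∂P := lintegral_mono hpt1
    _ = ∑' n, ∫⁻ ω, f n ω ^ r * S ω ^ m ∂P :=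
        lintegral_tsum fun n =>
          ((hfr_meas n).mul (hSmeas.pow_const m)).aemeasurable
    _ ≤ ∑' n, 2 ^ (m - 1)
          * ((∫⁻ ω, f n ω ^ q ∂P) + (∫⁻ ω, f n ω ^ r ∂P) * ∫⁻ ω, S ω ^ m ∂P) := by
        refine ENNReal.tsum_le_tsum fun n => ?_
        calc ∫⁻ ω, f n ω ^ r * S ω ^ m ∂P
            ≤ ∫⁻ ω, 2 ^ (m - 1) * (f n ω ^ q + f n ω ^ r * T n ω ^ m) ∂P :=
              lintegral_mono (hpt2 n)
          _ = 2 ^ (m - 1) * ((∫⁻ ω, f n ω ^ q ∂P)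
                + ∫⁻ ω, f n ω ^ r * T n ω ^ m ∂P) := by
              rw [lintegral_const_mul (f := fun ω => f n ω ^ q + f n ω ^ r * T n ω ^ m) _
                  ((hfq_meas n).add ((hfr_meas n).mul ((hTmeas n).pow_const m))),
                lintegral_add_left (hfq_meas n)]
          _ = 2 ^ (m - 1) * ((∫⁻ ω, f n ω ^ q ∂P)
                + (∫⁻ ω, f n ω ^ r ∂P) * ∫⁻ ω, T n ω ^ m ∂P) := by
              rw [hprod n]
          _ ≤ 2 ^ (m - 1) * ((∫⁻ ω, f n ω ^ q ∂P)
                + (∫⁻ ω, f n ω ^ r ∂P) * ∫⁻ ω, S ω ^ m ∂P) := by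
              exact mul_le_mul_right
                (add_le_add_right (mul_le_mul_right (hTm_le n) _) _) _
    _ = 2 ^ (m - 1) * ((∑' n, ∫⁻ ω, f n ω ^ q ∂P)
          + (∑' n, ∫⁻ ω, f n ω ^ r ∂P) * ∫⁻ ω, S ω ^ m ∂P) := by
        rw [ENNReal.tsum_mul_left, ENNReal.tsum_add, ENNReal.tsum_mul_right]

end
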